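/- If f : [a,b] → ℝ is n-times differentiable with f^{(n)} ≥ 0 on [a,b], then for any n+1 distinct points a ≤ x₀ < x₁ < ⋯ < xₙ ≤ b, the n-th order divided difference [x₀,…,xₙ;f] is ≥ 0. -/

import Mathlib

/-- The divided difference of `f` at `n+1` points, defined recursively. -/
noncomputable def divDiff (f : ℝ → ℝ) : (n : ℕ) → (Fin (n + 1) → ℝ) → ℝ
  | 0, x => f (x 0)
  | n + 1, x =>
      (divDiff f n (fun i => x i.succ) - divDiff f n (fun i => x i.castSucc)) /
        (x (Fin.last (n + 1)) - x 0)

lemma polyEval_contDiff (p : Polynomial ℝ) : ContDiff ℝ ⊤ fun t : ℝ => p.eval t := by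
  induction p using Polynomial.induction_on' with
  | add p q hp hq => simpa [Polynomial.eval_add] using hp.add hq
  | monomial n c =>
      simpa [Polynomial.eval_monomial] using (contDiff_const (c := c)).mul (contDiff_id.pow n)

lemma polyEval_iteratedDerivWithin (a b : ℝ) (hab : a < b) (p : Polynomial ℝ) :
    ∀ (n : ℕ), ∀ x ∈ Set.Icc a b,
      iteratedDerivWithin n (fun t => p.eval t) (Set.Icc a b) x =
        (Polynomial.derivative^[n] p).eval x := by
  intro n
  induction n generalizing p with
  | zero => intro x hx; simp [iteratedDerivWithin_zero]
  | succ n ih =>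
      intro x hx
      rw [iteratedDerivWithin_succ']
      have hcong : Set.EqOn (derivWithin (fun t => p.eval t) (Set.Icc a b))
          (fun t => p.derivative.eval t) (Set.Icc a b) := by
        intro y hy
        exact p.derivWithin ((uniqueDiffOn_Icc hab) y hy)
      rw [iteratedDerivWithin_congr hcong hx]
      rw [ih p.derivative x hx, Function.iterate_succ_apply]

/-- Existence of an interpolating polynomial whose `n`-th coefficient is the divided
difference. -/
lemma exists_interp (f : ℝ → ℝ) :
    ∀ (n : ℕ) (x : Fin (n + 1) → ℝ), StrictMono x →
      ∃ p : Polynomial ℝ, p.natDegree ≤ n ∧ p.coeff n = divDiff f n x ∧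
        ∀ i, p.eval (x i) = f (x i) := by
  intro n
  induction n with
  | zero =>
      intro x _
      refine ⟨Polynomial.C (f (x 0)), by simp, by simp [divDiff], ?_⟩
      intro i
      have : i = 0 := Fin.ext (by omega)
      simp [this]
  | succ n ih =>
      intro x hmono
      obtain ⟨q, hqdeg, hqcoeff, hqeval⟩ := ih (fun i => x i.succ)
        (hmono.comp (Fin.strictMono_succ))
      obtain ⟨r, hrdeg, hrcoeff, hreval⟩ := ih (fun i => x i.castSucc)
        (hmono.comp (Fin.strictMono_castSucc))
      set x0 := x 0 with hx0def
      set xl := x (Fin.last (n + 1)) with hxldef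
      have hd : x0 < xl := hmono (by simp [Fin.lt_def])
      have hd0 : xl - x0 ≠ 0 := sub_ne_zero.mpr hd.ne'
      refine ⟨Polynomial.C ((xl - x0)⁻¹) *
        ((Polynomial.X - Polynomial.C x0) * q + (Polynomial.C xl - Polynomial.X) * r),
        ?_, ?_, ?_⟩
      · refine le_trans (Polynomial.natDegree_mul_le) ?_
        simp only [Polynomial.natDegree_C, zero_add]
        refine le_trans (Polynomial.natDegree_add_le _ _) ?_
        refine max_le (le_trans Polynomial.natDegree_mul_le ?_)
          (le_trans Polynomial.natDegree_mul_le ?_)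
        · have : (Polynomial.X - Polynomial.C x0).natDegree ≤ 1 := by
            refine le_trans (Polynomial.natDegree_sub_le _ _) ?_
            simp [Polynomial.natDegree_X]
          omega
        · have : (Polynomial.C xl - Polynomial.X).natDegree ≤ 1 := by
            refine le_trans (Polynomial.natDegree_sub_le _ _) ?_
            simp [Polynomial.natDegree_X]
          omega
      · have hq1 : q.coeff (n + 1) = 0 := Polynomial.coeff_eq_zero_of_natDegree_lt (by omega)
        have hr1 : r.coeff (n + 1) = 0 := Polynomial.coeff_eq_zero_of_natDegree_lt (by omega)
        rw [Polynomial.coeff_C_mul]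
        rw [show (Polynomial.X - Polynomial.C x0) * q + (Polynomial.C xl - Polynomial.X) * r
          = Polynomial.X * q - Polynomial.C x0 * q + (Polynomial.C xl * r - Polynomial.X * r) by
            ring]
        rw [Polynomial.coeff_add, Polynomial.coeff_sub, Polynomial.coeff_sub,
          Polynomial.coeff_X_mul, Polynomial.coeff_X_mul, Polynomial.coeff_C_mul,
          Polynomial.coeff_C_mul, hq1, hr1, hqcoeff, hrcoeff]
        have hdd : divDiff f (n + 1) x = ((divDiff f n fun i => x i.succ) -
            divDiff f n fun i => x i.castSucc) / (xl - x0) := rfl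
        rw [hdd]
        field_simp
        ring
      · intro i
        simp only [Polynomial.eval_mul, Polynomial.eval_add, Polynomial.eval_sub,
          Polynomial.eval_C, Polynomial.eval_X]
        by_cases h0 : i = 0
        · subst h0
          have h00 : r.eval x0 = f x0 := by
            have := hreval 0
            simpa using this
          rw [h00]
          field_simp
          rw [← hx0def]; ring
        · obtain ⟨j, rfl⟩ := Fin.exists_succ_eq.mpr h0
          have hq : q.eval (x j.succ) = f (x j.succ) := hqeval j
          by_cases hl : j.succ = Fin.last (n + 1)
          · rw [hl] at hq ⊢
            rw [hq]
            field_simp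
            rw [← hxldef]; ring
          · obtain ⟨k, hk⟩ := Fin.exists_castSucc_eq.mpr hl
            have hr : r.eval (x j.succ) = f (x j.succ) := by
              have := hreval k
              rwa [hk] at this
            rw [hq, hr]
            have : (x j.succ - x0) * f (x j.succ) + (xl - x j.succ) * f (x j.succ)
                = (xl - x0) * f (x j.succ) := by ring
            rw [this]
            field_simp

/-- Iterated Rolle: a `C^n` function vanishing at `n+1` increasing points of `[a,b]`
has a vanishing `n`-th derivative somewhere in `[a,b]`. -/
lemma rolle_iter (a b : ℝ) (hab : a < b) :
    ∀ (n : ℕ) (g : ℝ → ℝ), ContDiffOn ℝ n g (Set.Icc a b) →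
      ∀ x : Fin (n + 1) → ℝ, StrictMono x → (∀ i, x i ∈ Set.Icc a b) →
        (∀ i, g (x i) = 0) →
        ∃ ξ ∈ Set.Icc a b, iteratedDerivWithin n g (Set.Icc a b) ξ = 0 := by
  intro n
  induction n with
  | zero =>
      intro g _ x _ hx hz
      exact ⟨x 0, hx 0, by simpa [iteratedDerivWithin_zero] using hz 0⟩
  | succ n ih =>
      intro g hg x hmono hx hz
      have H : ∀ i : Fin (n + 1), ∃ c ∈ Set.Ioo (x i.castSucc) (x i.succ), deriv g c = 0 := by
        intro i
        have hlt : x i.castSucc < x i.succ := hmono Fin.castSucc_lt_succ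
        have hcont : ContinuousOn g (Set.Icc (x i.castSucc) (x i.succ)) :=
          hg.continuousOn.mono (Set.Icc_subset_Icc (hx i.castSucc).1 (hx i.succ).2)
        have heq : g (x i.castSucc) = g (x i.succ) := by rw [hz, hz]
        exact exists_deriv_eq_zero hlt hcont heq
      choose c hc1 hc2 using H
      have hcmono : StrictMono c := by
        intro i j hij
        refine lt_of_lt_of_le (hc1 i).2 (le_trans ?_ (hc1 j).1.le)
        refine hmono.monotone ?_
        rw [Fin.le_def]
        simp only [Fin.val_succ, Fin.coe_castSucc]
        exact Fin.lt_def.mp hij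
      have hcmem : ∀ i, c i ∈ Set.Icc a b := fun i =>
        ⟨(hx i.castSucc).1.trans (hc1 i).1.le, ((hc1 i).2.le).trans (hx i.succ).2⟩
      have hcint : ∀ i, c i ∈ Set.Ioo a b := fun i =>
        ⟨lt_of_le_of_lt (hx i.castSucc).1 (hc1 i).1, lt_of_lt_of_le (hc1 i).2 (hx i.succ).2⟩
      set g1 := derivWithin g (Set.Icc a b) with hg1def
      have hg1 : ContDiffOn ℝ n g1 (Set.Icc a b) := by
        refine hg.derivWithin (uniqueDiffOn_Icc hab) ?_
        exact_mod_cast le_refl ((n : ℕ∞) + 1)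
      have hg1z : ∀ i, g1 (c i) = 0 := by
        intro i
        rw [hg1def, derivWithin_of_mem_nhds (Icc_mem_nhds (hcint i).1 (hcint i).2)]
        exact hc2 i
      obtain ⟨ξ, hξ, hval⟩ := ih g1 hg1 c hcmono hcmem hg1z
      refine ⟨ξ, hξ, ?_⟩
      rw [iteratedDerivWithin_succ']
      exact hval

theorem stmt_7 (n : ℕ) (a b : ℝ) (hab : a < b) (f : ℝ → ℝ)
    (hsmooth : ContDiffOn ℝ n f (Set.Icc a b))
    (hderiv : ∀ x ∈ Set.Icc a b, 0 ≤ iteratedDerivWithin n f (Set.Icc a b) x)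
    (x : Fin (n + 1) → ℝ) (hmono : StrictMono x)
    (hx0 : a ≤ x 0) (hxn : x (Fin.last n) ≤ b) :
    0 ≤ divDiff f n x := by
  obtain ⟨p, hpdeg, hpcoeff, hpeval⟩ := exists_interp f n x hmono
  have hxmem : ∀ i, x i ∈ Set.Icc a b := by
    intro i
    constructor
    · exact hx0.trans (hmono.monotone (Fin.zero_le i))
    · exact (hmono.monotone (Fin.le_last i)).trans hxn
  have hpcd : ContDiffOn ℝ n (fun t => p.eval t) (Set.Icc a b) :=
    ((polyEval_contDiff p).of_le le_top).contDiffOn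
  set g : ℝ → ℝ := fun t => f t - p.eval t with hgdef
  have hgcd : ContDiffOn ℝ n g (Set.Icc a b) := hsmooth.sub hpcd
  have hgz : ∀ i, g (x i) = 0 := by
    intro i; simp [hgdef, hpeval i]
  obtain ⟨ξ, hξ, hval⟩ := rolle_iter a b hab n g hgcd x hmono hxmem hgz
  have hsub : iteratedDerivWithin n g (Set.Icc a b) ξ =
      iteratedDerivWithin n f (Set.Icc a b) ξ -
        iteratedDerivWithin n (fun t => p.eval t) (Set.Icc a b) ξ := by
    have : g = f - fun t => p.eval t := by rfl
    rw [this]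
    exact iteratedDerivWithin_sub hξ (uniqueDiffOn_Icc hab) (hsmooth ξ hξ) (hpcd ξ hξ)
  have hpoly : iteratedDerivWithin n (fun t => p.eval t) (Set.Icc a b) ξ =
      (n.factorial : ℝ) * divDiff f n x := by
    rw [polyEval_iteratedDerivWithin a b hab p n ξ hξ]
    have hdeg0 : (Polynomial.derivative^[n] p).natDegree ≤ 0 := by
      have := Polynomial.natDegree_iterate_derivative p n
      omega
    rw [Polynomial.eq_C_of_natDegree_le_zero hdeg0]
    rw [Polynomial.eval_C]
    rw [Polynomial.coeff_iterate_derivative]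
    simp only [zero_add, Nat.descFactorial_self, hpcoeff]
    simp [nsmul_eq_mul]
  have hfξ : 0 ≤ iteratedDerivWithin n f (Set.Icc a b) ξ := hderiv ξ hξ
  rw [hsub, hpoly] at hval
  have hfac : (0 : ℝ) < n.factorial := by positivity
  nlinarith [hfξ, hval, hfac]
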